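/- For real numbers b > 1, p ∈ [0,1], and integer n ≥ 1, the inequality p·(1 - b·p/(b+1))^(n-1) + (1-p)^n ≥ ((1-p) + p^(b+1)/(b+1))^(n-1) holds. -/

import Mathlib

open Real

theorem stmt_0 (b p : ℝ) (hb : 1 < b) (hp0 : 0 ≤ p) (hp1 : p ≤ 1)
    (n : ℕ) (hn : 1 ≤ n) :
    p * (1 - b * p / (b + 1)) ^ (n - 1) + (1 - p) ^ n ≥
      ((1 - p) + p ^ (b + 1) / (b + 1)) ^ (n - 1) := by
  set m := n - 1 with hm
  have hb1 : (0:ℝ) < b + 1 := by linarith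
  have hx0 : 0 ≤ 1 - b * p / (b + 1) := by
    rw [sub_nonneg, div_le_one hb1]
    nlinarith
  have hy0 : 0 ≤ 1 - p := by linarith
  -- p^(b+1) ≤ p^2
  have hrpow : p ^ (b + 1) ≤ p ^ (2:ℕ) := by
    rcases eq_or_lt_of_le hp0 with h | h
    · rw [← h, Real.zero_rpow (by linarith)]
      positivity
    · calc p ^ (b + 1) ≤ p ^ ((2:ℕ):ℝ) := by
            apply Real.rpow_le_rpow_of_exponent_ge h hp1
            push_cast; linarith
          _ = p ^ (2:ℕ) := Real.rpow_natCast p 2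
  have hbase : (1 - p) + p ^ (b + 1) / (b + 1) ≤ 1 - p + p ^ (2:ℕ) / (b + 1) := by
    gcongr
  have hbase0 : 0 ≤ (1 - p) + p ^ (b + 1) / (b + 1) := by
    have : 0 ≤ p ^ (b + 1) := Real.rpow_nonneg hp0 _
    positivity
  have step1 : ((1 - p) + p ^ (b + 1) / (b + 1)) ^ m ≤
      (1 - p + p ^ (2:ℕ) / (b + 1)) ^ m :=
    pow_le_pow_left₀ hbase0 hbase m
  -- convexity
  have hconv := (convexOn_pow m).2 (Set.mem_Ici.mpr hx0) (Set.mem_Ici.mpr hy0)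
      hp0 (by linarith : (0:ℝ) ≤ 1 - p) (by ring)
  simp only [smul_eq_mul] at hconv
  have heq : p * (1 - b * p / (b + 1)) + (1 - p) * (1 - p)
      = 1 - p + p ^ (2:ℕ) / (b + 1) := by
    field_simp
    ring
  rw [heq] at hconv
  have hn' : n = m + 1 := by omega
  have hpow : (1 - p) * (1 - p) ^ m = (1 - p) ^ n := by
    rw [hn', pow_succ]; ring
  calc ((1 - p) + p ^ (b + 1) / (b + 1)) ^ m
      ≤ (1 - p + p ^ (2:ℕ) / (b + 1)) ^ m := step1
    _ ≤ p * (1 - b * p / (b + 1)) ^ m + (1 - p) * (1 - p) ^ m := hconv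
    _ = p * (1 - b * p / (b + 1)) ^ m + (1 - p) ^ n := by rw [hpow]
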